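/- Let r ≥ 0 be an integer, let σ(x) = 1/(1+e^{-x}) be the sigmoid function, and for B > 0 let δ_B(x) = σ(Bx) − σ(B(x−1)). There exists a constant C > 0 depending only on r such that for every B ≥ 1, all integers 0 ≤ k, ℓ ≤ r+1 with |k − ℓ| ≥ 2, and every integer 0 ≤ j ≤ r, sup_{x ∈ [ℓ, ℓ+1)} | (d^j/dx^j)[ δ_B(x − k) ] | ≤ C · B^r · e^{−B}. -/

import Mathlib

open Real MeasureTheory

/-- The _root_.sigmoid function `σ(x) = 1/(1+e^{-x})`. -/
noncomputable def _root_.sigmoid (x : ℝ) : ℝ := 1 / (1 + Real.exp (-x))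

/-- `δ_B(x) = σ(Bx) - σ(B(x-1))`, a smooth approximation of the indicator of `[0,1)`. -/
noncomputable def deltaB (B x : ℝ) : ℝ := _root_.sigmoid (B * x) - _root_.sigmoid (B * (x - 1))

lemma one_add_exp_pos (x : ℝ) : 0 < 1 + Real.exp (-x) := by positivity

lemma sigmoid_pos (x : ℝ) : 0 < _root_.sigmoid x := by unfold _root_.sigmoid; positivity

lemma sigmoid_lt_one (x : ℝ) : _root_.sigmoid x < 1 := by
  unfold _root_.sigmoid
  rw [div_lt_one (one_add_exp_pos x)]
  linarith [Real.exp_pos (-x)]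

lemma sigmoid_le_exp (x : ℝ) : _root_.sigmoid x ≤ Real.exp x := by
  unfold _root_.sigmoid
  rw [div_le_iff₀ (one_add_exp_pos x)]
  have key : Real.exp x * Real.exp (-x) = 1 := by rw [← Real.exp_add]; simp
  nlinarith [Real.exp_pos x]

lemma one_sub_sigmoid_le_exp (x : ℝ) : 1 - _root_.sigmoid x ≤ Real.exp (-x) := by
  have h1 : (0:ℝ) < 1 + Real.exp (-x) := one_add_exp_pos x
  have h2 : 1 - _root_.sigmoid x = Real.exp (-x) / (1 + Real.exp (-x)) := by
    unfold _root_.sigmoid; field_simp; ring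
  rw [h2]
  exact div_le_self (Real.exp_pos _).le (by linarith [Real.exp_pos (-x)])

lemma contDiff_sigmoid' : ContDiff ℝ ⊤ _root_.sigmoid := by
  unfold _root_.sigmoid
  exact contDiff_const.div (contDiff_const.add (Real.contDiff_exp.comp contDiff_neg))
    (fun x => (one_add_exp_pos x).ne')

lemma hasDerivAt_sigmoid (x : ℝ) :
    HasDerivAt _root_.sigmoid (_root_.sigmoid x * (1 - _root_.sigmoid x)) x := by
  have h1 : HasDerivAt (fun x : ℝ => 1 + Real.exp (-x)) (-Real.exp (-x)) x := by
    have := ((Real.hasDerivAt_exp (-x)).comp x (hasDerivAt_neg x))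
    simpa using this.const_add 1
  have h2 := h1.inv (one_add_exp_pos x).ne'
  have h3 : (fun x : ℝ => 1 + Real.exp (-x))⁻¹ = _root_.sigmoid := by
    funext y; simp [_root_.sigmoid, one_div]
  rw [h3] at h2
  refine h2.congr_deriv ?_
  have h4 : 1 - _root_.sigmoid x = Real.exp (-x) / (1 + Real.exp (-x)) := by
    unfold _root_.sigmoid; field_simp; ring
  rw [h4]
  unfold _root_.sigmoid
  field_simp

open Polynomial
lemma sigmoid_poly (j : ℕ) : ∃ q : Polynomial ℝ,
    ∀ x, iteratedDeriv (j+1) _root_.sigmoid x = ((X - X^2) * q).eval (_root_.sigmoid x) := by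
  induction j with
  | zero =>
    refine ⟨1, fun x => ?_⟩
    rw [iteratedDeriv_one, (_root_.hasDerivAt_sigmoid x).deriv]
    simp; ring
  | succ n ih =>
    obtain ⟨q, hq⟩ := ih
    refine ⟨((X - X^2) * q).derivative, fun x => ?_⟩
    rw [iteratedDeriv_succ]
    have hf : iteratedDeriv (n+1) _root_.sigmoid = fun y => ((X - X^2) * q).eval (_root_.sigmoid y) :=
      funext hq
    rw [hf]
    have h : HasDerivAt (fun y : ℝ => ((X - X^2) * q).eval (_root_.sigmoid y))
        (((X - X^2) * q).derivative.eval (_root_.sigmoid x) * (_root_.sigmoid x * (1 - _root_.sigmoid x))) x := by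
      simpa only [Function.comp_def] using
        (((X - X^2) * q).hasDerivAt (_root_.sigmoid x)).comp x (_root_.hasDerivAt_sigmoid x)
    rw [h.deriv]
    simp; ring

lemma eval_bound (q : Polynomial ℝ) {y : ℝ} (h0 : 0 ≤ y) (h1 : y ≤ 1) :
    |q.eval y| ≤ ∑ i ∈ Finset.range (q.natDegree + 1), |q.coeff i| := by
  rw [Polynomial.eval_eq_sum_range]
  refine (Finset.abs_sum_le_sum_abs _ _).trans ?_
  refine Finset.sum_le_sum fun i _ => ?_
  rw [abs_mul]
  have hy : |y ^ i| ≤ 1 := by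
    rw [abs_pow, abs_of_nonneg h0]; exact pow_le_one₀ h0 h1
  calc |q.coeff i| * |y ^ i| ≤ |q.coeff i| * 1 :=
        mul_le_mul_of_nonneg_left hy (abs_nonneg _)
    _ = |q.coeff i| := mul_one _

lemma sig_decay (x : ℝ) : _root_.sigmoid x * (1 - _root_.sigmoid x) ≤ Real.exp (-|x|) := by
  rcases le_or_gt 0 x with h | h
  · rw [abs_of_nonneg h]
    nlinarith [_root_.sigmoid_pos x, _root_.sigmoid_lt_one x, one_sub_sigmoid_le_exp x]
  · rw [abs_of_neg h, neg_neg]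
    nlinarith [_root_.sigmoid_pos x, _root_.sigmoid_lt_one x, sigmoid_le_exp x]

lemma single_bound (j : ℕ) : ∃ C > (0:ℝ), ∀ x,
    |iteratedDeriv (j+1) _root_.sigmoid x| ≤ C * Real.exp (-|x|) := by
  obtain ⟨q, hq⟩ := sigmoid_poly j
  set M := ∑ i ∈ Finset.range (q.natDegree + 1), |q.coeff i| with hM
  have hM0 : 0 ≤ M := Finset.sum_nonneg fun i _ => abs_nonneg _
  refine ⟨M + 1, by linarith, fun x => ?_⟩
  rw [hq x, Polynomial.eval_mul, abs_mul]
  have h1 : |(X - X^2 : Polynomial ℝ).eval (_root_.sigmoid x)| ≤ Real.exp (-|x|) := by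
    have he : (X - X^2 : Polynomial ℝ).eval (_root_.sigmoid x) = _root_.sigmoid x * (1 - _root_.sigmoid x) := by
      simp; ring
    rw [he, abs_of_nonneg (by nlinarith [_root_.sigmoid_pos x, _root_.sigmoid_lt_one x])]
    exact sig_decay x
  have h2 : |q.eval (_root_.sigmoid x)| ≤ M := eval_bound q (_root_.sigmoid_pos x).le (_root_.sigmoid_lt_one x).le
  calc |(X - X^2 : Polynomial ℝ).eval (_root_.sigmoid x)| * |q.eval (_root_.sigmoid x)|
      ≤ Real.exp (-|x|) * M := by
        exact mul_le_mul h1 h2 (abs_nonneg _) (Real.exp_pos _).le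
    _ ≤ (M + 1) * Real.exp (-|x|) := by nlinarith [Real.exp_pos (-|x|)]

lemma sig_bound (r : ℕ) : ∃ C > (0:ℝ), ∀ j, 1 ≤ j → j ≤ r → ∀ x,
    |iteratedDeriv j _root_.sigmoid x| ≤ C * Real.exp (-|x|) := by
  induction r with
  | zero => exact ⟨1, one_pos, fun j h1 h0 => by omega⟩
  | succ n ih =>
    obtain ⟨C, hC, h⟩ := ih
    obtain ⟨D, hD, hDb⟩ := single_bound n
    refine ⟨max C D, lt_max_of_lt_left hC, fun j hj1 hjn x => ?_⟩
    rcases Nat.lt_or_ge j (n+1) with hlt | hge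
    · exact (h j hj1 (by omega) x).trans
        (mul_le_mul_of_nonneg_right (le_max_left _ _) (Real.exp_pos _).le)
    · have : j = n + 1 := by omega
      subst this
      exact (hDb x).trans
        (mul_le_mul_of_nonneg_right (le_max_right _ _) (Real.exp_pos _).le)

lemma contDiff_affine_sigmoid (B c : ℝ) (n : ℕ∞) :
    ContDiff ℝ n (fun y : ℝ => _root_.sigmoid (B * (y - c))) :=
  (contDiff_sigmoid'.of_le le_top).comp
    (contDiff_const.mul (contDiff_id.sub contDiff_const))

lemma iteratedDeriv_affine_sigmoid (B c : ℝ) (j : ℕ) (x : ℝ) :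
    iteratedDeriv j (fun y => _root_.sigmoid (B * (y - c))) x
      = B ^ j * iteratedDeriv j _root_.sigmoid (B * (x - c)) := by
  have h1 : (fun y : ℝ => _root_.sigmoid (B * (y - c)))
      = fun y : ℝ => (fun z : ℝ => _root_.sigmoid (B * z)) (y + (-c)) := by
    funext y; rw [sub_eq_add_neg]
  have h2 : iteratedDeriv j (fun y : ℝ => (fun z : ℝ => _root_.sigmoid (B * z)) (y + (-c))) x
      = iteratedDeriv j (fun z : ℝ => _root_.sigmoid (B * z)) (x + (-c)) := by
    exact congrFun (iteratedDeriv_comp_add_const j (fun z : ℝ => _root_.sigmoid (B * z)) (-c)) x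
  rw [h1, h2, congrFun (iteratedDeriv_comp_const_mul (contDiff_sigmoid'.of_le le_top) B) (x + (-c)),
    ← sub_eq_add_neg]

lemma iteratedDeriv_delta_split (B : ℝ) (c : ℝ) (j : ℕ) (x : ℝ) :
    iteratedDeriv j (fun y => deltaB B (y - c)) x
      = B ^ j * iteratedDeriv j _root_.sigmoid (B * (x - c))
        - B ^ j * iteratedDeriv j _root_.sigmoid (B * (x - (c+1))) := by
  have hfun : (fun y : ℝ => deltaB B (y - c))
      = (fun y : ℝ => _root_.sigmoid (B * (y - c))) - (fun y : ℝ => _root_.sigmoid (B * (y - (c+1)))) := by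
    funext y
    have : B * (y - c - 1) = B * (y - (c + 1)) := by ring
    simp only [deltaB, Pi.sub_apply, this]
  rw [hfun]
  have hs : iteratedDeriv j ((fun y : ℝ => _root_.sigmoid (B * (y - c)))
        - (fun y : ℝ => _root_.sigmoid (B * (y - (c+1))))) x
      = iteratedDeriv j (fun y : ℝ => _root_.sigmoid (B * (y - c))) x
        - iteratedDeriv j (fun y : ℝ => _root_.sigmoid (B * (y - (c+1)))) x := by
    simp only [← iteratedDerivWithin_univ]
    exact iteratedDerivWithin_sub (Set.mem_univ x) uniqueDiffOn_univ
      (contDiff_affine_sigmoid B c j).contDiffWithinAt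
      (contDiff_affine_sigmoid B (c+1) j).contDiffWithinAt
  rw [hs, iteratedDeriv_affine_sigmoid, iteratedDeriv_affine_sigmoid]

/-- decay of the translate `δ_B(· - k)` on the unit interval `[ℓ, ℓ+1)` when
`|k - ℓ| ≥ 2`, together with all derivatives up to order `r`. -/
theorem stmt1 (r : ℕ) :
    ∃ C > (0:ℝ), ∀ B : ℝ, 1 ≤ B → ∀ k ℓ : ℕ, k ≤ r + 1 → ℓ ≤ r + 1 →
      2 ≤ |(k : ℤ) - (ℓ : ℤ)| → ∀ j : ℕ, j ≤ r → ∀ x ∈ Set.Ico (ℓ : ℝ) (ℓ + 1),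
      |iteratedDeriv j (fun y => deltaB B (y - k)) x| ≤ C * B ^ r * Real.exp (-B) := by
  obtain ⟨C, hC, hb⟩ := sig_bound r
  refine ⟨2 * C + 2, by linarith, ?_⟩
  intro B hB k ℓ hk hℓ hkl j hj x hx
  obtain ⟨hx1, hx2⟩ := hx
  have hB0 : (0:ℝ) < B := by linarith
  have hexp : (0:ℝ) < Real.exp (-B) := Real.exp_pos _
  have hBr : (1:ℝ) ≤ B ^ r := one_le_pow₀ hB
  have hBj : B ^ j ≤ B ^ r := pow_le_pow_right₀ hB hj
  rw [iteratedDeriv_delta_split]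
  set t1 := B * (x - (k:ℝ)) with ht1
  set t2 := B * (x - ((k:ℝ) + 1)) with ht2
  have hdist : (B ≤ t1 ∧ B ≤ t2) ∨ (t1 ≤ -B ∧ t2 ≤ -B) := by
    rcases le_abs.mp hkl with h | h
    · right
      have hkℓ : (ℓ:ℝ) + 2 ≤ (k:ℝ) := by exact_mod_cast (by omega : (ℓ:ℤ) + 2 ≤ (k:ℤ))
      have ha : x - (k:ℝ) ≤ -1 := by linarith
      have hb' : x - ((k:ℝ) + 1) ≤ -1 := by linarith
      have m1 := mul_le_mul_of_nonneg_left ha hB0.le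
      have m2 := mul_le_mul_of_nonneg_left hb' hB0.le
      exact ⟨by rw [ht1]; linarith, by rw [ht2]; linarith⟩
    · left
      have hkℓ : (k:ℝ) + 2 ≤ (ℓ:ℝ) := by exact_mod_cast (by omega : (k:ℤ) + 2 ≤ (ℓ:ℤ))
      have ha : (1:ℝ) ≤ x - (k:ℝ) := by linarith
      have hb' : (1:ℝ) ≤ x - ((k:ℝ) + 1) := by linarith
      have m1 := mul_le_mul_of_nonneg_left ha hB0.le
      have m2 := mul_le_mul_of_nonneg_left hb' hB0.le
      exact ⟨by rw [ht1]; linarith, by rw [ht2]; linarith⟩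
  rcases Nat.eq_zero_or_pos j with rfl | hj1
  · simp only [pow_zero, one_mul, iteratedDeriv_zero]
    have key : |_root_.sigmoid t1 - _root_.sigmoid t2| ≤ 2 * Real.exp (-B) := by
      rcases hdist with ⟨h1, h2⟩ | ⟨h1, h2⟩
      · have e1 : 1 - _root_.sigmoid t1 ≤ Real.exp (-B) :=
          (one_sub_sigmoid_le_exp t1).trans (Real.exp_le_exp.mpr (by linarith))
        have e2 : 1 - _root_.sigmoid t2 ≤ Real.exp (-B) :=
          (one_sub_sigmoid_le_exp t2).trans (Real.exp_le_exp.mpr (by linarith))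
        rw [abs_sub_le_iff]
        constructor <;>
          linarith [_root_.sigmoid_lt_one t1, _root_.sigmoid_lt_one t2, _root_.sigmoid_pos t1, _root_.sigmoid_pos t2,
            hexp.le]
      · have e1 : _root_.sigmoid t1 ≤ Real.exp (-B) :=
          (sigmoid_le_exp t1).trans (Real.exp_le_exp.mpr (by linarith))
        have e2 : _root_.sigmoid t2 ≤ Real.exp (-B) :=
          (sigmoid_le_exp t2).trans (Real.exp_le_exp.mpr (by linarith))
        rw [abs_sub_le_iff]
        constructor <;>
          linarith [_root_.sigmoid_lt_one t1, _root_.sigmoid_lt_one t2, _root_.sigmoid_pos t1, _root_.sigmoid_pos t2,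
            hexp.le]
    calc |_root_.sigmoid t1 - _root_.sigmoid t2| ≤ 2 * Real.exp (-B) := key
      _ ≤ (2 * C + 2) * B ^ r * Real.exp (-B) := by
          have s1 : 2 * Real.exp (-B) ≤ (2 * C + 2) * Real.exp (-B) :=
            mul_le_mul_of_nonneg_right (by linarith) hexp.le
          have s2 := mul_le_mul_of_nonneg_left hBr
            (mul_nonneg (by linarith : (0:ℝ) ≤ 2 * C + 2) hexp.le)
          nlinarith [s1, s2]
  · have habs : B ≤ |t1| ∧ B ≤ |t2| := by
      rcases hdist with ⟨h1, h2⟩ | ⟨h1, h2⟩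
      · exact ⟨h1.trans (le_abs_self t1), h2.trans (le_abs_self t2)⟩
      · exact ⟨(by linarith : B ≤ -t1).trans (neg_le_abs t1),
          (by linarith : B ≤ -t2).trans (neg_le_abs t2)⟩
    have e1 : |iteratedDeriv j _root_.sigmoid t1| ≤ C * Real.exp (-B) := by
      refine (hb j hj1 hj t1).trans ?_
      have h := Real.exp_le_exp.mpr (by linarith [habs.1] : -|t1| ≤ -B)
      exact mul_le_mul_of_nonneg_left h hC.le
    have e2 : |iteratedDeriv j _root_.sigmoid t2| ≤ C * Real.exp (-B) := by
      refine (hb j hj1 hj t2).trans ?_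
      have h := Real.exp_le_exp.mpr (by linarith [habs.2] : -|t2| ≤ -B)
      exact mul_le_mul_of_nonneg_left h hC.le
    have tri : ∀ a b : ℝ, |a - b| ≤ |a| + |b| := fun a b => by
      rw [sub_eq_add_neg]
      exact (abs_add_le a (-b)).trans_eq (by rw [abs_neg])
    have hBjpos : (0:ℝ) ≤ B ^ j := (pow_pos hB0 j).le
    calc |B ^ j * iteratedDeriv j _root_.sigmoid t1 - B ^ j * iteratedDeriv j _root_.sigmoid t2|
        ≤ |B ^ j * iteratedDeriv j _root_.sigmoid t1| + |B ^ j * iteratedDeriv j _root_.sigmoid t2| :=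
          tri _ _
      _ = B ^ j * |iteratedDeriv j _root_.sigmoid t1| + B ^ j * |iteratedDeriv j _root_.sigmoid t2| := by
          rw [abs_mul, abs_mul, abs_of_nonneg hBjpos]
      _ ≤ B ^ r * (C * Real.exp (-B)) + B ^ r * (C * Real.exp (-B)) := by
          apply add_le_add <;>
            exact mul_le_mul hBj (by assumption) (abs_nonneg _) (by positivity)
      _ = 2 * C * B ^ r * Real.exp (-B) := by ring
      _ ≤ (2 * C + 2) * B ^ r * Real.exp (-B) := by
          have : (0:ℝ) ≤ B ^ r * Real.exp (-B) := by positivity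
          nlinarith [this]
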